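/- arXiv:2406.17631 — 2 statements merged into one kernel-verified Lean document; each statement's English description precedes it below -/
import Mathlib

section
/- Let n and k be nonnegative integers with n ≥ k+1, and let G = K_{n+k+3} + ((k+2)K₃ ∪ K₂) be the join of the complete graph on n+k+3 vertices with the disjoint union of k+2 triangles K₃ and a single edge K₂. Then G is not a ({K₂, odd cycles of length ≥ 5}, n)-factor critical avoidable graph: taking W to consist of n vertices of the K_{n+k+3} part and e the edge of the K₂ part, and X the remaining k+3 vertices of the K_{n+k+3} part, one has c_tc((G−W−e)−X) = k+4 > k+3 = |X|, so G−W−e has no spanning subgraph each of whose components is an edge K₂ or an odd cycle of length at least 5. -/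
open SimpleGraph

variable {α β : Type*}

/-- The graph obtained from `G` by deleting the vertices in `S` (an induced subgraph
on the complement of `S`). -/
def SimpleGraph.delVerts (G : SimpleGraph α) (S : Set α) : SimpleGraph ↥(Sᶜ) :=
  G.induce Sᶜ

/-- The number of isolated vertices of a graph. -/
noncomputable def isoCount (H : SimpleGraph α) : ℕ :=
  Nat.card {v : α // ∀ w, ¬ H.Adj v w}

/-- The number of connected components of a graph. -/
noncomputable def compCount (H : SimpleGraph α) : ℕ :=
  Nat.card H.ConnectedComponent

/-- A graph is `m`-connected if it has more than `m` vertices and stays connected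
after deleting any fewer than `m` vertices. -/
def IsMConnected (G : SimpleGraph α) (m : ℕ) : Prop :=
  m < Nat.card α ∧ ∀ S : Set α, S.ncard < m → (G.delVerts S).Connected

/-- `G` has a spanning subgraph each of whose components is `K₂` or a cycle of length ≥ 3. -/
def HasK2CycleFactor (G : SimpleGraph α) : Prop :=
  ∃ F : SimpleGraph α, F ≤ G ∧ ∀ c : F.ConnectedComponent,
    Nonempty ((F.induce c.supp) ≃g (⊤ : SimpleGraph (Fin 2))) ∨
    ∃ m : ℕ, 3 ≤ m ∧ Nonempty ((F.induce c.supp) ≃g cycleGraph m)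

/-- `G` has a spanning subgraph each of whose components is `K₂` or an odd cycle of length ≥ 5. -/
def HasK2OddCycleFactor (G : SimpleGraph α) : Prop :=
  ∃ F : SimpleGraph α, F ≤ G ∧ ∀ c : F.ConnectedComponent,
    Nonempty ((F.induce c.supp) ≃g (⊤ : SimpleGraph (Fin 2))) ∨
    ∃ m : ℕ, 5 ≤ m ∧ Odd m ∧ Nonempty ((F.induce c.supp) ≃g cycleGraph m)

/-- `B` is (the vertex set of) a block of `H`: a maximal set inducing a connected
subgraph with no cut vertex. -/
def IsBlock (H : SimpleGraph α) (B : Set α) : Prop :=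
  ((H.induce B).Connected ∧ ∀ v ∈ B, B = {v} ∨ (H.induce (B \ {v})).Connected) ∧
  ∀ C : Set α, B ⊆ C →
    ((H.induce C).Connected ∧ ∀ v ∈ C, C = {v} ∨ (H.induce (C \ {v})).Connected) → B = C

/-- A triangular cactus: a connected graph each of whose blocks is a triangle;
by convention the one-vertex graph `K₁` is also a triangular cactus. -/
def IsTriangularCactus (H : SimpleGraph α) : Prop :=
  H.Connected ∧ ((∃ v : α, ∀ w : α, w = v) ∨
    ∀ B : Set α, IsBlock H B → Nonempty ((H.induce B) ≃g (⊤ : SimpleGraph (Fin 3))))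

/-- The number of connected components of `H` that are triangular cacti. -/
noncomputable def ctcCount (H : SimpleGraph α) : ℕ :=
  Nat.card {c : H.ConnectedComponent // IsTriangularCactus (H.induce c.supp)}

/-- The join of two graphs: their disjoint union together with all edges between them. -/
def SimpleGraph.join (G₁ : SimpleGraph α) (G₂ : SimpleGraph β) : SimpleGraph (α ⊕ β) where
  Adj u v := match u, v with
    | Sum.inl a, Sum.inl b => G₁.Adj a b
    | Sum.inr a, Sum.inr b => G₂.Adj a b
    | Sum.inl _, Sum.inr _ => True
    | Sum.inr _, Sum.inl _ => True
  symm := ⟨fun u v => match u, v with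
    | Sum.inl _, Sum.inl _ => fun h => G₁.adj_symm h
    | Sum.inr _, Sum.inr _ => fun h => G₂.adj_symm h
    | Sum.inl _, Sum.inr _ => fun _ => trivial
    | Sum.inr _, Sum.inl _ => fun _ => trivial⟩
  loopless := ⟨fun u => by cases u <;> simp⟩

/-- `G` is a `({K₂, C}, n)`-factor critical avoidable graph. -/
def K2CycleFactorCriticalAvoidable (G : SimpleGraph α) (n : ℕ) : Prop :=
  ∀ W : Set α, W.ncard = n → ∀ u v : α, u ∉ W → v ∉ W → G.Adj u v →
    HasK2CycleFactor ((G.deleteEdges {s(u, v)}).delVerts W)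

/-- `G` is a `({K₂, C_{2i+1} | i ≥ 2}, n)`-factor critical avoidable graph. -/
def K2OddCycleFactorCriticalAvoidable (G : SimpleGraph α) (n : ℕ) : Prop :=
  ∀ W : Set α, W.ncard = n → ∀ u v : α, u ∉ W → v ∉ W → G.Adj u v →
    HasK2OddCycleFactor ((G.deleteEdges {s(u, v)}).delVerts W)

/-- The disjoint union of `m` triangles `K₃`. -/
def trianglesGraph (m : ℕ) : SimpleGraph (Fin m × Fin 3) where
  Adj p q := p.1 = q.1 ∧ p.2 ≠ q.2
  symm := ⟨fun _ _ h => ⟨h.1.symm, fun hh => h.2 hh.symm⟩⟩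
  loopless := ⟨fun _ h => h.2 rfl⟩

/-- The graph `K_{n+k+3} + ((k+2)K₁ ∪ K₂)`. -/
def exampleGraph1 (n k : ℕ) :
    SimpleGraph (Fin (n + k + 3) ⊕ (Fin (k + 2) ⊕ Fin 2)) :=
  (⊤ : SimpleGraph (Fin (n + k + 3))).join
    ((⊥ : SimpleGraph (Fin (k + 2))) ⊕g (⊤ : SimpleGraph (Fin 2)))

/-- The graph `K_{n+k+3} + ((k+2)K₃ ∪ K₂)`. -/
def exampleGraph2 (n k : ℕ) :
    SimpleGraph (Fin (n + k + 3) ⊕ ((Fin (k + 2) × Fin 3) ⊕ Fin 2)) :=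
  (⊤ : SimpleGraph (Fin (n + k + 3))).join
    (trianglesGraph (k + 2) ⊕g (⊤ : SimpleGraph (Fin 2)))

/-- The graph `K_{n+k+2} + ((k+1)K₁ ∪ K₂)`. -/
def exampleGraph3 (n k : ℕ) :
    SimpleGraph (Fin (n + k + 2) ⊕ (Fin (k + 1) ⊕ Fin 2)) :=
  (⊤ : SimpleGraph (Fin (n + k + 2))).join
    ((⊥ : SimpleGraph (Fin (k + 1))) ⊕g (⊤ : SimpleGraph (Fin 2)))

namespace Statement16Aux

abbrev V (n k : ℕ) := Fin (n + k + 3) ⊕ ((Fin (k + 2) × Fin 3) ⊕ Fin 2)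
abbrev PT (k : ℕ) : Type := Fin (k + 2) ⊕ Fin 2

variable {n k : ℕ}

def Ge (n k : ℕ) : SimpleGraph (V n k) :=
  (exampleGraph2 n k).deleteEdges {s(Sum.inr (Sum.inr 0), Sum.inr (Sum.inr 1))}

/-- part map, `none` for the clique vertices -/
def pt : V n k → Option (PT k)
  | Sum.inl _ => none
  | Sum.inr (Sum.inl (i, _)) => some (Sum.inl i)
  | Sum.inr (Sum.inr t) => some (Sum.inr t)

lemma pt_eq_none_iff {v : V n k} : pt v = none ↔ ∃ i, v = Sum.inl i := by
  cases v with
  | inl i => simp [pt]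
  | inr y => rcases y with ⟨⟨i,j⟩⟩|t <;> simp [pt]

lemma ge_adj_tri {i i' : Fin (k+2)} {j j' : Fin 3} :
    (Ge n k).Adj (Sum.inr (Sum.inl (i,j))) (Sum.inr (Sum.inl (i',j'))) ↔ i = i' ∧ j ≠ j' := by
  rw [Ge, SimpleGraph.deleteEdges_adj]
  have h2 : (exampleGraph2 n k).Adj (Sum.inr (Sum.inl (i,j))) (Sum.inr (Sum.inl (i',j')))
      ↔ (i = i' ∧ j ≠ j') := Iff.rfl
  rw [h2]
  simp [Sym2.eq_iff]

lemma ge_adj_cross {x : Fin (k+2) × Fin 3} {t : Fin 2} :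
    ¬ (Ge n k).Adj (Sum.inr (Sum.inl x)) (Sum.inr (Sum.inr t)) := by
  rw [Ge, SimpleGraph.deleteEdges_adj]
  rintro ⟨h, -⟩
  have h' : ((trianglesGraph (k+2)) ⊕g (⊤ : SimpleGraph (Fin 2))).Adj (Sum.inl x) (Sum.inr t) := h
  simpa using h'

lemma ge_adj_k2 {t t' : Fin 2} :
    ¬ (Ge n k).Adj (Sum.inr (Sum.inr t)) (Sum.inr (Sum.inr t')) := by
  rw [Ge, SimpleGraph.deleteEdges_adj]
  rintro ⟨h, hne⟩
  have h' : t ≠ t' := h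
  apply hne
  fin_cases t <;> fin_cases t' <;> simp_all [Sym2.eq_iff]

end Statement16Aux
namespace Statement16Aux

variable {n k : ℕ}

lemma walk_const {γ β : Type*} {G : SimpleGraph γ} (f : γ → β)
    (h : ∀ a b, G.Adj a b → f a = f b) : ∀ {u v : γ}, G.Walk u v → f u = f v
  | _, _, SimpleGraph.Walk.nil => rfl
  | _, _, SimpleGraph.Walk.cons h' p => (h _ _ h').trans (walk_const f h p)

lemma conn_of_forall {γ : Type*} [Nonempty γ] (A : SimpleGraph γ)
    (h : ∀ u v : γ, u = v ∨ A.Adj u v) : A.Connected :=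
  ⟨fun u v => (h u v).elim (fun e => e ▸ SimpleGraph.Reachable.refl u)
    (fun a => a.reachable)⟩

lemma forall_induce {γ : Type*} (A : SimpleGraph γ)
    (h : ∀ u v : γ, u = v ∨ A.Adj u v) (s : Set γ) :
    ∀ u v : ↥s, u = v ∨ (A.induce s).Adj u v :=
  fun u v => (h u.1 v.1).imp Subtype.ext id

abbrev S0 (n k : ℕ) : Set (V n k) := Set.range Sum.inl

lemma mem_S0c {v : V n k} : v ∈ (S0 n k)ᶜ ↔ ∃ y, v = Sum.inr y := by
  cases v <;> simp [S0]

def H0 (n k : ℕ) := (Ge n k).delVerts (S0 n k)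

lemma h0_adj {a b : ↥((S0 n k)ᶜ)} : (H0 n k).Adj a b ↔ (Ge n k).Adj a.1 b.1 := Iff.rfl

def ptt : V n k → PT k
  | Sum.inl _ => Sum.inr 0
  | Sum.inr (Sum.inl (i, _)) => Sum.inl i
  | Sum.inr (Sum.inr t) => Sum.inr t

lemma ptt_adj {a b : ↥((S0 n k)ᶜ)} (hab : (H0 n k).Adj a b) : ptt a.1 = ptt b.1 := by
  obtain ⟨ya, hya⟩ := mem_S0c.mp a.2
  obtain ⟨yb, hyb⟩ := mem_S0c.mp b.2
  rw [h0_adj, hya, hyb] at hab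
  rcases ya with ⟨i, j⟩ | t <;> rcases yb with ⟨i', j'⟩ | t'
  · rw [hya, hyb]; simp [ptt, (ge_adj_tri.mp hab).1]
  · exact absurd hab ge_adj_cross
  · exact absurd hab.symm ge_adj_cross
  · exact absurd hab ge_adj_k2

noncomputable def fC (n k : ℕ) : (H0 n k).ConnectedComponent → PT k :=
  SimpleGraph.ConnectedComponent.lift (fun x => ptt x.1)
    (fun _ _ p _ => walk_const _ (fun _ _ h => ptt_adj h) p)

lemma mem_S0c' (y : (Fin (k + 2) × Fin 3) ⊕ Fin 2) :
    (Sum.inr y : V n k) ∈ (S0 n k)ᶜ := mem_S0c.mpr ⟨y, rfl⟩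

lemma fC_bij : Function.Bijective (fC n k) := by
  constructor
  · intro c d
    refine SimpleGraph.ConnectedComponent.ind₂ (fun x y h => ?_) c d
    simp only [fC, SimpleGraph.ConnectedComponent.lift_mk] at h
    obtain ⟨ya, hya⟩ := mem_S0c.mp x.2
    obtain ⟨yb, hyb⟩ := mem_S0c.mp y.2
    rw [hya, hyb] at h
    rcases ya with ⟨i, j⟩ | t <;> rcases yb with ⟨i', j'⟩ | t'
    · simp only [ptt, Sum.inl.injEq] at h
      subst h
      by_cases hj : j = j'
      · have : x = y := Subtype.ext (by rw [hya, hyb, hj])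
        rw [this]
      · exact SimpleGraph.ConnectedComponent.sound
          (SimpleGraph.Adj.reachable (by rw [h0_adj, hya, hyb]; exact ge_adj_tri.mpr ⟨rfl, hj⟩))
    · simp [ptt] at h
    · simp [ptt] at h
    · simp only [ptt, Sum.inr.injEq] at h
      have : x = y := Subtype.ext (by rw [hya, hyb, h])
      rw [this]
  · intro p
    rcases p with i | t
    · exact ⟨(H0 n k).connectedComponentMk ⟨Sum.inr (Sum.inl (i, 0)), mem_S0c' _⟩, rfl⟩
    · exact ⟨(H0 n k).connectedComponentMk ⟨Sum.inr (Sum.inr t), mem_S0c' _⟩, rfl⟩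

lemma card_CC_H0 : Nat.card (H0 n k).ConnectedComponent = k + 4 := by
  rw [Nat.card_congr (Equiv.ofBijective _ fC_bij)]
  simp [Nat.card_eq_fintype_card]

end Statement16Aux
namespace Statement16Aux

variable {n k : ℕ}

def tr : V n k → Fin 3
  | Sum.inr (Sum.inl (_, j)) => j
  | _ => 0

lemma fC_mk (x : ↥((S0 n k)ᶜ)) : fC n k ((H0 n k).connectedComponentMk x) = ptt x.1 := rfl

lemma mk_eq_iff {x : ↥((S0 n k)ᶜ)} {c : (H0 n k).ConnectedComponent} :
    (H0 n k).connectedComponentMk x = c ↔ ptt x.1 = fC n k c := by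
  constructor
  · intro h; rw [← h, fC_mk]
  · intro h; exact fC_bij.1 (by rw [fC_mk, h])

lemma cactus_H0 (c : (H0 n k).ConnectedComponent) :
    IsTriangularCactus ((H0 n k).induce c.supp) := by
  rcases hp : fC n k c with i | t
  · -- triangle component
    have hmemv : ∀ j : Fin 3, (Sum.inr (Sum.inl (i, j)) : V n k) ∈ (S0 n k)ᶜ :=
      fun j => mem_S0c' _
    set vtx : Fin 3 → ↥((S0 n k)ᶜ) := fun j => ⟨Sum.inr (Sum.inl (i, j)), hmemv j⟩ with hvtx
    have hmk : ∀ j, ((H0 n k).connectedComponentMk (vtx j)) = c := by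
      intro j; rw [mk_eq_iff, hp]; rfl
    have hchar : ∀ w : ↥c.supp, ∃ j, w.1 = vtx j := by
      intro w
      have hw : ptt w.1.1 = Sum.inl i := by
        have := (SimpleGraph.ConnectedComponent.mem_supp_iff c w.1).mp w.2
        rw [mk_eq_iff, hp] at this; exact this
      obtain ⟨y, hy⟩ := mem_S0c.mp w.1.2
      rcases y with ⟨i', j'⟩ | t'
      · rw [hy] at hw
        have : i' = i := by simpa [ptt] using hw
        exact ⟨j', Subtype.ext (by rw [hy, this])⟩
      · rw [hy] at hw; simp [ptt] at hw
    set J : ↥c.supp → Fin 3 := fun w => tr w.1.1 with hJdef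
    have hJ : ∀ w : ↥c.supp, w.1 = vtx (J w) := by
      intro w
      obtain ⟨j, hj⟩ := hchar w
      have : J w = j := by rw [hJdef]; simp only [hj]; rfl
      rw [this, hj]
    have hadjJ : ∀ u w : ↥c.supp,
        ((H0 n k).induce c.supp).Adj u w ↔ J u ≠ J w := by
      intro u w
      have : ((H0 n k).induce c.supp).Adj u w ↔ (Ge n k).Adj u.1.1 w.1.1 := Iff.rfl
      rw [this, hJ u, hJ w]
      rw [show ((vtx (J u)) : ↥((S0 n k)ᶜ)).1 = Sum.inr (Sum.inl (i, J u)) from rfl,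
        show ((vtx (J w)) : ↥((S0 n k)ᶜ)).1 = Sum.inr (Sum.inl (i, J w)) from rfl,
        ge_adj_tri]
      simp
    have hpair : ∀ u w : ↥c.supp, u = w ∨ ((H0 n k).induce c.supp).Adj u w := by
      intro u w
      by_cases hJuw : J u = J w
      · exact Or.inl (Subtype.ext (by rw [hJ u, hJ w, hJuw]))
      · exact Or.inr ((hadjJ u w).mpr hJuw)
    have hmemc : ∀ j, vtx j ∈ c.supp := fun j =>
      (SimpleGraph.ConnectedComponent.mem_supp_iff c (vtx j)).mpr (hmk j)
    have hwne : ∀ j j' : Fin 3, j ≠ j' →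
        (⟨vtx j, hmemc j⟩ : ↥c.supp) ≠ ⟨vtx j', hmemc j'⟩ := by
      intro j j' hne h
      apply hne
      have := congrArg (fun w : ↥c.supp => w.1.1) h
      simpa [hvtx] using this
    haveI : Nonempty ↥c.supp := ⟨⟨vtx 0, hmemc 0⟩⟩
    constructor
    · exact conn_of_forall _ hpair
    · right
      intro B hB
      have hBuniv : B = Set.univ := by
        apply hB.2 Set.univ (Set.subset_univ _)
        constructor
        · haveI : Nonempty ↥(Set.univ : Set ↥c.supp) := ⟨⟨⟨vtx 0, hmemc 0⟩, trivial⟩⟩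
          exact conn_of_forall _ (forall_induce _ hpair _)
        · intro v _
          right
          have : ∃ u : ↥c.supp, u ≠ v := by
            by_cases h0 : (⟨vtx 0, hmemc 0⟩ : ↥c.supp) = v
            · exact ⟨⟨vtx 1, hmemc 1⟩, by rw [← h0]; exact (hwne 1 0 (by decide))⟩
            · exact ⟨⟨vtx 0, hmemc 0⟩, h0⟩
          obtain ⟨u, hu⟩ := this
          haveI : Nonempty ↥(Set.univ \ {v} : Set ↥c.supp) := ⟨⟨u, ⟨trivial, hu⟩⟩⟩
          exact conn_of_forall _ (forall_induce _ hpair _)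
      subst hBuniv
      have Jbij : Function.Bijective J := by
        constructor
        · intro u w h
          exact Subtype.ext (by rw [hJ u, hJ w, h])
        · intro j
          exact ⟨⟨vtx j, hmemc j⟩, rfl⟩
      refine ⟨⟨(Equiv.Set.univ _).trans (Equiv.ofBijective J Jbij), ?_⟩⟩
      intro u w
      show J u.1 ≠ J w.1 ↔ _
      rw [show (((H0 n k).induce c.supp).induce Set.univ).Adj u w ↔
        ((H0 n k).induce c.supp).Adj u.1 w.1 from Iff.rfl, hadjJ]
  · -- K₂-endpoint singleton component
    have hv0 : ((H0 n k).connectedComponentMk ⟨Sum.inr (Sum.inr t), mem_S0c' _⟩) = c := by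
      rw [mk_eq_iff, hp]; rfl
    set v0 : ↥((S0 n k)ᶜ) := ⟨Sum.inr (Sum.inr t), mem_S0c' _⟩ with hv0def
    have hall : ∀ w : ↥c.supp, w.1 = v0 := by
      intro w
      have hw : ptt w.1.1 = Sum.inr t := by
        have := (SimpleGraph.ConnectedComponent.mem_supp_iff c w.1).mp w.2
        rw [mk_eq_iff, hp] at this; exact this
      obtain ⟨y, hy⟩ := mem_S0c.mp w.1.2
      rcases y with ⟨i', j'⟩ | t'
      · rw [hy] at hw; simp [ptt] at hw
      · rw [hy] at hw
        have : t' = t := by simpa [ptt] using hw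
        exact Subtype.ext (by rw [hy, this])
    have hmemc : v0 ∈ c.supp := (SimpleGraph.ConnectedComponent.mem_supp_iff c v0).mpr hv0
    haveI : Nonempty ↥c.supp := ⟨⟨v0, hmemc⟩⟩
    constructor
    · exact conn_of_forall _ (fun u w => Or.inl (Subtype.ext ((hall u).trans (hall w).symm)))
    · exact Or.inl ⟨⟨v0, hmemc⟩, fun w => Subtype.ext (hall w)⟩

lemma ctc_H0 : ctcCount (H0 n k) = k + 4 := by
  rw [ctcCount, Nat.card_congr (Equiv.subtypeUnivEquiv cactus_H0)]
  exact card_CC_H0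

end Statement16Aux
namespace Statement16Aux

open SimpleGraph

variable {n k : ℕ}

lemma pt_inl_elim {v : V n k} {i : Fin (k+2)} (h : pt v = some (Sum.inl i)) :
    v = Sum.inr (Sum.inl (i, tr v)) := by
  rcases v with ia | (⟨i', j'⟩ | t)
  · simp [pt] at h
  · simp only [pt, Option.some.injEq, Sum.inl.injEq] at h
    rw [← h]; rfl
  · simp [pt] at h

lemma pt_none_of_adj_k2 {v : V n k} {t : Fin 2}
    (h : (Ge n k).Adj (Sum.inr (Sum.inr t)) v) : pt v = none := by
  rcases v with ia | (⟨i', j'⟩ | t')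
  · rfl
  · exact absurd h.symm ge_adj_cross
  · exact absurd h ge_adj_k2

open Fin.NatCast Fin.CommRing in
lemma partB {W : Set (V n k)} (hW : W ⊆ Set.range Sum.inl) (hWn : W.ncard = n) :
    ¬ HasK2OddCycleFactor ((Ge n k).delVerts W) := by
  classical
  rintro ⟨F, hFle, hcomp⟩
  have hmemr : ∀ y : (Fin (k + 2) × Fin 3) ⊕ Fin 2, (Sum.inr y : V n k) ∈ Wᶜ := by
    intro y hy
    obtain ⟨i, hi⟩ := hW hy
    exact (by simp : (Sum.inl i : V n k) ≠ Sum.inr y) hi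
  have hFadj : ∀ a b : ↥Wᶜ, F.Adj a b → (Ge n k).Adj a.1 b.1 := fun a b h => hFle h
  -- adjacent vertices have compatible parts
  have hptadj : ∀ (a b : ↥Wᶜ) (p : PT k), F.Adj a b → pt a.1 = some p →
      pt b.1 = none ∨ pt b.1 = some p := by
    intro a b p hab hpa
    have hg := hFadj a b hab
    obtain ⟨va, hva⟩ : ∃ v, a.1 = v := ⟨a.1, rfl⟩
    rcases ha : a.1 with ia | (⟨i, j⟩ | t)
    · rw [ha] at hpa; simp [pt] at hpa
    · rcases hb : b.1 with ib | (⟨i', j'⟩ | t')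
      · left; simp [pt]
      · rw [ha, hb] at hg
        rw [ha] at hpa
        right
        have h1 := (ge_adj_tri.mp hg).1
        simp only [pt, Option.some.injEq] at hpa ⊢
        rw [← h1, ← hpa]
      · rw [ha, hb] at hg
        exact absurd hg ge_adj_cross
    · rcases hb : b.1 with ib | (⟨i', j'⟩ | t')
      · left; simp [pt]
      · rw [ha, hb] at hg
        exact absurd hg.symm ge_adj_cross
      · rw [ha, hb] at hg
        exact absurd hg ge_adj_k2
  -- every component is a "cycle" of length 2 (i.e. K₂) or ≥ 5
  have hshape : ∀ c : F.ConnectedComponent, ∃ (m : ℕ) (g : Fin (m + 2) → ↥Wᶜ),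
      (m = 0 ∨ 5 ≤ m + 2) ∧ Function.Injective g ∧ Set.range g = c.supp ∧
      ∀ i : Fin (m + 2), F.Adj (g i) (g (i + 1)) := by
    intro c
    rcases hcomp c with hK | ⟨m, hm5, -, hC⟩
    · obtain ⟨φ⟩ := hK
      refine ⟨0, fun i => (φ.symm i).1, Or.inl rfl, ?_, ?_, ?_⟩
      · intro i i' h
        exact φ.symm.toEquiv.injective (Subtype.ext h)
      · ext w
        constructor
        · rintro ⟨i, rfl⟩
          exact (φ.symm i).2
        · intro hw
          exact ⟨φ ⟨w, hw⟩, congrArg Subtype.val (φ.symm_apply_apply ⟨w, hw⟩)⟩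
      · intro i
        have htop : (⊤ : SimpleGraph (Fin 2)).Adj i (i + 1) := by
          revert i; decide
        exact φ.symm.map_rel_iff.mpr htop
    · obtain ⟨φ⟩ := hC
      obtain ⟨m', rfl⟩ : ∃ m', m = m' + 2 := ⟨m - 2, by omega⟩
      refine ⟨m', fun i => (φ.symm i).1, Or.inr hm5, ?_, ?_, ?_⟩
      · intro i i' h
        exact φ.symm.toEquiv.injective (Subtype.ext h)
      · ext w
        constructor
        · rintro ⟨i, rfl⟩
          exact (φ.symm i).2
        · intro hw
          exact ⟨φ ⟨w, hw⟩, congrArg Subtype.val (φ.symm_apply_apply ⟨w, hw⟩)⟩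
      · intro i
        have hcyc : (cycleGraph (m' + 2)).Adj i (i + 1) := by
          rw [cycleGraph_adj]
          right
          rw [add_sub_cancel_left]
        exact φ.symm.map_rel_iff.mpr hcyc
  choose mf gf hsh2 hginj hgrange hgadj using hshape
  -- walk lemma: parts are constant along walks avoiding clique vertices
  have hwalk : ∀ (p : PT k) {a b : ↥Wᶜ} (w : F.Walk a b), pt a.1 = some p →
      (∀ z, z ∈ w.support → pt z.1 ≠ none) → pt b.1 = some p := by
    intro p a b w
    induction w with
    | nil => exact fun h _ => h
    | @cons a' b' c' hadj w ih =>
      intro ha hsup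
      rcases hptadj _ _ p hadj ha with hn | hs
      · exact absurd hn (hsup b' (by
          rw [SimpleGraph.Walk.support_cons]
          exact List.mem_cons_of_mem _ w.start_mem_support))
      · exact ih hs (fun z hz => hsup z (by
          rw [SimpleGraph.Walk.support_cons]
          exact List.mem_cons_of_mem _ hz))
  have hconst : ∀ (c : F.ConnectedComponent) (p : PT k) (u : ↥Wᶜ), u ∈ c.supp →
      pt u.1 = some p → (∀ x, x ∈ c.supp → pt x.1 ≠ none) →
      ∀ x, x ∈ c.supp → pt x.1 = some p := by
    intro c p u hu hup hno x hx
    have hreach : F.Reachable u x := SimpleGraph.ConnectedComponent.exact (hu.trans hx.symm)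
    obtain ⟨w⟩ := hreach
    refine hwalk p w hup ?_
    intro z hz
    refine hno z ?_
    have hz' : F.Reachable u z := ⟨w.takeUntil z hz⟩
    rw [SimpleGraph.ConnectedComponent.mem_supp_iff, ← hu]
    exact (SimpleGraph.ConnectedComponent.eq.mpr hz').symm
  -- every part has a vertex whose component meets the clique remainder X
  have hfind : ∀ p : PT k, ∃ u : ↥Wᶜ, pt u.1 = some p ∧
      ∃ x, x ∈ (F.connectedComponentMk u).supp ∧ pt x.1 = none := by
    intro p
    rcases p with i | t
    · -- triangle part: the hard case
      by_contra hno
      push_neg at hno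
      set uu : Fin 3 → ↥Wᶜ := fun j => ⟨Sum.inr (Sum.inl (i, j)), hmemr _⟩ with huu
      have hptu : ∀ j, pt (uu j).1 = some (Sum.inl i) := fun j => rfl
      set cc : Fin 3 → F.ConnectedComponent := fun j => F.connectedComponentMk (uu j) with hcc
      have humem : ∀ j, uu j ∈ (cc j).supp := fun j => rfl
      have hcst : ∀ j x, x ∈ (cc j).supp → pt x.1 = some (Sum.inl i) := by
        intro j
        exact hconst (cc j) _ (uu j) (humem j) (hptu j)
          (fun x hx hnone => hno (uu j) (hptu j) x hx hnone)
      have uu_inj : ∀ j j', uu j = uu j' → j = j' := by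
        intro j j' h
        have := congrArg (fun z : ↥Wᶜ => z.1) h
        simpa [huu] using this
      have hx_uu : ∀ j x, x ∈ (cc j).supp → ∃ j', x = uu j' := by
        intro j x hx
        exact ⟨tr x.1, Subtype.ext (pt_inl_elim (hcst j x hx))⟩
      have hm0 : ∀ j, mf (cc j) = 0 := by
        intro j
        rcases hsh2 (cc j) with h0 | h5
        · exact h0
        · exfalso
          have hinj3 : Function.Injective (fun a : Fin (mf (cc j) + 2) => tr ((gf (cc j) a).1)) := by
            intro a a' h
            apply hginj (cc j)
            apply Subtype.ext
            have hma : gf (cc j) a ∈ (cc j).supp := by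
              rw [← hgrange (cc j)]; exact ⟨a, rfl⟩
            have hma' : gf (cc j) a' ∈ (cc j).supp := by
              rw [← hgrange (cc j)]; exact ⟨a', rfl⟩
            have ea := pt_inl_elim (hcst j _ hma)
            have ea' := pt_inl_elim (hcst j _ hma')
            rw [ea, ea']
            simp only at h
            rw [h]
          have := Fintype.card_le_of_injective _ hinj3
          simp only [Fintype.card_fin] at this
          omega
      have hsupp2 : ∀ j x, x ∈ (cc j).supp →
          x = gf (cc j) ⟨0, by omega⟩ ∨ x = gf (cc j) ⟨1, by omega⟩ := by
        intro j x hx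
        rw [← hgrange (cc j)] at hx
        obtain ⟨a, ha⟩ := hx
        have hav : a.1 < mf (cc j) + 2 := a.2
        have hm := hm0 j
        have hav2 : a.1 = 0 ∨ a.1 = 1 := by omega
        rcases hav2 with h0 | h1
        · left; rw [← ha]; congr 1; exact Fin.ext h0
        · right; rw [← ha]; congr 1; exact Fin.ext h1
      have hpairing : ∀ j, ∃ j', j' ≠ j ∧ uu j' ∈ (cc j).supp ∧
          ∀ x, x ∈ (cc j).supp → x = uu j ∨ x = uu j' := by
        intro j
        obtain ⟨a, b, hab, hamem, hbmem, hall⟩ : ∃ a b : ↥Wᶜ, a ≠ b ∧ a ∈ (cc j).supp ∧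
            b ∈ (cc j).supp ∧ ∀ x, x ∈ (cc j).supp → x = a ∨ x = b := by
          refine ⟨gf (cc j) ⟨0, by omega⟩, gf (cc j) ⟨1, by omega⟩, ?_, ?_, ?_, hsupp2 j⟩
          · intro h
            have := hginj (cc j) h
            simp [Fin.ext_iff] at this
          · rw [← hgrange (cc j)]; exact ⟨_, rfl⟩
          · rw [← hgrange (cc j)]; exact ⟨_, rfl⟩
        rcases hall (uu j) (humem j) with hja | hjb
        · obtain ⟨j', hj'⟩ := hx_uu j b hbmem
          refine ⟨j', ?_, hj' ▸ hbmem, ?_⟩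
          · intro h
            subst h
            exact hab (hja.symm.trans hj'.symm)
          · intro x hx
            rcases hall x hx with h | h
            · exact Or.inl (h.trans hja.symm)
            · exact Or.inr (h.trans hj')
        · obtain ⟨j', hj'⟩ := hx_uu j a hamem
          refine ⟨j', ?_, hj' ▸ hamem, ?_⟩
          · intro h
            subst h
            exact hab (hj'.trans hjb)
          · intro x hx
            rcases hall x hx with h | h
            · exact Or.inr (h.trans hj')
            · exact Or.inl (h.trans hjb.symm)
      have key : ∀ j j', uu j' ∈ (cc j).supp → cc j' = cc j := fun j j' h => h
      obtain ⟨p0, hp0ne, hp0mem, hp0all⟩ := hpairing 0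
      have hc0 : cc p0 = cc 0 := key 0 p0 hp0mem
      have hp0v : p0.1 ≠ 0 := fun h => hp0ne (Fin.ext h)
      have hp0lt : p0.1 < 3 := p0.2
      set r : Fin 3 := ⟨3 - p0.1, by omega⟩ with hrdef
      have hrval : r.1 = 3 - p0.1 := rfl
      have hr0 : r ≠ 0 := by
        intro h
        have h2 := congrArg Fin.val h
        have h3 : (0 : Fin 3).val = 0 := rfl
        rw [hrval, h3] at h2
        omega
      have hrp0 : r ≠ p0 := by
        intro h
        have h2 := congrArg Fin.val h
        rw [hrval] at h2
        omega
      have hcr : cc r ≠ cc 0 := by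
        intro h
        have hmem : uu r ∈ (cc 0).supp := by
          rw [SimpleGraph.ConnectedComponent.mem_supp_iff, ← h]
        rcases hp0all (uu r) hmem with h' | h'
        · exact hr0 (uu_inj _ _ h')
        · exact hrp0 (uu_inj _ _ h')
      obtain ⟨w, hwne, hwmem, hwall⟩ := hpairing r
      have hcw : cc w = cc r := key r w hwmem
      have hw0 : w ≠ 0 := by
        intro h
        rw [h] at hcw
        exact hcr hcw.symm
      have hwp0 : w ≠ p0 := by
        intro h
        rw [h] at hcw
        exact hcr (hcw.symm.trans hc0)
      have hwv : w.1 ≠ 0 := fun h => hw0 (Fin.ext h)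
      have hwvp : w.1 ≠ p0.1 := fun h => hwp0 (Fin.ext h)
      have hwvr : w.1 ≠ r.1 := fun h => hwne (Fin.ext h)
      have hwlt := w.2
      rw [hrval] at hwvr
      omega
    · -- K₂ part: the easy case
      set u : ↥Wᶜ := ⟨Sum.inr (Sum.inr t), hmemr _⟩ with hudef
      set c := F.connectedComponentMk u with hcdef
      have hu : u ∈ c.supp := rfl
      rw [← hgrange c] at hu
      obtain ⟨i0, hi0⟩ := hu
      have hadj := hgadj c i0
      rw [hi0] at hadj
      refine ⟨u, rfl, gf c (i0+1), ?_, ?_⟩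
      · exact (SimpleGraph.ConnectedComponent.connectedComponentMk_eq_of_adj hadj).symm
      · exact pt_none_of_adj_k2 (hFadj _ _ hadj)
  -- For each part, find a clique vertex whose cycle-predecessor lies in that part
  have hspec : ∀ p : PT k, ∃ x : ↥Wᶜ, pt x.1 = none ∧
      ∃ (c : F.ConnectedComponent) (i : Fin (mf c + 2)), gf c i = x ∧
        pt ((gf c (i - 1)).1) = some p := by
    intro p
    obtain ⟨u, hup, x', hx'mem, hx'none⟩ := hfind p
    set c := F.connectedComponentMk u with hcdef
    have hu : u ∈ c.supp := rfl
    rw [← hgrange c] at hu hx'mem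
    obtain ⟨i0, hi0⟩ := hu
    obtain ⟨j0, hj0⟩ := hx'mem
    have hne : j0 ≠ i0 := by
      intro h
      rw [h, hi0] at hj0
      rw [← hj0, hup] at hx'none
      exact nomatch hx'none
    have hex : ∃ s : ℕ, 0 < s ∧ pt ((gf c (i0 + (s : Fin (mf c + 2)))).1) = none := by
      refine ⟨(j0 - i0).val, ?_, ?_⟩
      · have hsub : j0 - i0 ≠ 0 := sub_ne_zero_of_ne hne
        refine Nat.pos_of_ne_zero fun h => hsub (Fin.ext (by simp [h]))
      · rw [Fin.cast_val_eq_self, add_comm, sub_add_cancel, hj0]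
        exact hx'none
    set t0 := Nat.find hex with ht0def
    obtain ⟨ht0pos, ht0none⟩ := Nat.find_spec hex
    have hcast : ∀ s : ℕ, ((s + 1 : ℕ) : Fin (mf c + 2)) = (s : Fin (mf c + 2)) + 1 := by
      intro s
      push_cast
      ring
    have hrun : ∀ s : ℕ, s < t0 → pt ((gf c (i0 + (s : Fin (mf c + 2)))).1) = some p := by
      intro s
      induction s with
      | zero =>
        intro _
        rw [Nat.cast_zero, add_zero, hi0]
        exact hup
      | succ s ih =>
        intro hlt
        have hs := ih (Nat.lt_of_succ_lt hlt)
        have hadjs := hgadj c (i0 + (s : Fin (mf c + 2)))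
        rcases hptadj _ _ p hadjs hs with hnone | hsome
        · exfalso
          refine Nat.find_min hex hlt ⟨Nat.succ_pos s, ?_⟩
          rw [hcast s, ← add_assoc]
          exact hnone
        · rw [hcast s, ← add_assoc]
          exact hsome
    refine ⟨gf c (i0 + (t0 : Fin (mf c + 2))), ht0none, c, i0 + (t0 : Fin (mf c + 2)), rfl, ?_⟩
    have harith : i0 + (t0 : Fin (mf c + 2)) - 1 = i0 + ((t0 - 1 : ℕ) : Fin (mf c + 2)) := by
      have h1 : ((t0 - 1 : ℕ) : Fin (mf c + 2)) = (t0 : Fin (mf c + 2)) - 1 := by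
        rw [Nat.cast_sub ht0pos, Nat.cast_one]
      rw [h1, add_sub_assoc]
    rw [harith]
    exact hrun (t0 - 1) (by omega)
  -- injectivity of the assignment part ↦ clique vertex
  have hspec_inj : ∀ (p q : PT k) (x : ↥Wᶜ),
      (∃ (c : F.ConnectedComponent) (i : Fin (mf c + 2)), gf c i = x ∧
        pt ((gf c (i - 1)).1) = some p) →
      (∃ (c : F.ConnectedComponent) (i : Fin (mf c + 2)), gf c i = x ∧
        pt ((gf c (i - 1)).1) = some q) → p = q := by
    rintro p q x ⟨c, i, hci, hpi⟩ ⟨c', i', hci', hqi⟩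
    have hcc' : c = c' := by
      have h1 : x ∈ c.supp := by rw [← hgrange]; exact ⟨i, hci⟩
      have h2 : x ∈ c'.supp := by rw [← hgrange]; exact ⟨i', hci'⟩
      rw [SimpleGraph.ConnectedComponent.mem_supp_iff] at h1 h2
      exact h1.symm.trans h2
    subst hcc'
    have hii' : i = i' := hginj c (hci.trans hci'.symm)
    subst hii'
    exact Option.some.inj (hpi.symm.trans hqi)
  choose xx hxnone hxspec using hspec
  have hxinj : Function.Injective xx := fun p q h =>
    hspec_inj p q (xx p) (hxspec p) (h ▸ hxspec q)
  have hcard1 : Nat.card (PT k) ≤ Nat.card {x : ↥Wᶜ // pt x.1 = none} :=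
    Nat.card_le_card_of_injective (fun p => (⟨xx p, hxnone p⟩ : {x : ↥Wᶜ // pt x.1 = none}))
      (fun p q h => hxinj (congrArg Subtype.val h))
  have hcard2 : Nat.card {x : ↥Wᶜ // pt x.1 = none} = k + 3 := by
    have e : {x : ↥Wᶜ // pt x.1 = none} ≃
        ↥((Set.range (Sum.inl : Fin (n+k+3) → V n k)) \ W) :=
      { toFun := fun x => ⟨x.1.1, by
          obtain ⟨i, hi⟩ := pt_eq_none_iff.mp x.2
          exact ⟨⟨i, hi.symm⟩, x.1.2⟩⟩
        invFun := fun y => ⟨⟨y.1, y.2.2⟩, pt_eq_none_iff.mpr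
          (by obtain ⟨i, hi⟩ := y.2.1; exact ⟨i, hi.symm⟩)⟩
        left_inv := fun x => Subtype.ext (Subtype.ext rfl)
        right_inv := fun y => Subtype.ext rfl }
    rw [Nat.card_congr e, Nat.card_coe_set_eq, Set.ncard_diff hW, hWn]
    rw [← Set.image_univ, Set.ncard_image_of_injective _ Sum.inl_injective, Set.ncard_univ]
    simp only [Nat.card_eq_fintype_card, Fintype.card_fin]
    omega
  have hcard3 : Nat.card (PT k) = k + 4 := by
    simp [Nat.card_eq_fintype_card]
  omega


end Statement16Aux
/-- For `n ≥ k+1`, the graph `G = K_{n+k+3} + ((k+2)K₃ ∪ K₂)` is not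
a `({K₂, C_{2i+1} | i ≥ 2}, n)`-factor critical avoidable graph: taking `W` to be `n`
vertices of the `K_{n+k+3}` part, `e` the edge of the `K₂` part, and `X` the remaining
`k+3` vertices of the `K_{n+k+3}` part, one has `c_tc((G−W−e)−X) = k+4 > k+3 = |X|` and
`G−W−e` has no such factor. -/
theorem statement16 (n k : ℕ) (hnk : k + 1 ≤ n) :
    (∀ W X : Set (Fin (n + k + 3) ⊕ ((Fin (k + 2) × Fin 3) ⊕ Fin 2)),
      W ⊆ Set.range Sum.inl → X ⊆ Set.range Sum.inl → Disjoint W X →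
      W.ncard = n → X.ncard = k + 3 → W ∪ X = Set.range Sum.inl →
      ctcCount (((exampleGraph2 n k).deleteEdges
          {s(Sum.inr (Sum.inr 0), Sum.inr (Sum.inr 1))}).delVerts (W ∪ X)) = k + 4 ∧
      ¬ HasK2OddCycleFactor (((exampleGraph2 n k).deleteEdges
          {s(Sum.inr (Sum.inr 0), Sum.inr (Sum.inr 1))}).delVerts W)) ∧
    ¬ K2OddCycleFactorCriticalAvoidable (exampleGraph2 n k) n := by
  constructor
  · intro W X hWr hXr hdisj hWn hXn hWX
    constructor
    · rw [hWX]
      exact Statement16Aux.ctc_H0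
    · exact Statement16Aux.partB hWr hWn
  · intro hcrit
    set W : Set (Statement16Aux.V n k) :=
      Sum.inl '' (Set.range (Fin.castLE (show n ≤ n + k + 3 by omega))) with hWdef
    have hWsub : W ⊆ Set.range Sum.inl := by
      rintro x ⟨i, -, rfl⟩
      exact ⟨i, rfl⟩
    have hWn : W.ncard = n := by
      rw [hWdef, Set.ncard_image_of_injective _ Sum.inl_injective,
        ← Set.image_univ, Set.ncard_image_of_injective _ (Fin.castLE_injective _),
        Set.ncard_univ]
      simp [Nat.card_eq_fintype_card]
    have hnotin : ∀ t : Fin 2, (Sum.inr (Sum.inr t) : Statement16Aux.V n k) ∉ W := by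
      rintro t ⟨i, -, h⟩
      exact nomatch h
    have hadj : (exampleGraph2 n k).Adj (Sum.inr (Sum.inr 0)) (Sum.inr (Sum.inr 1)) :=
      (show (0 : Fin 2) ≠ 1 by decide)
    have := hcrit W hWn (Sum.inr (Sum.inr 0)) (Sum.inr (Sum.inr 1))
      (hnotin 0) (hnotin 1) hadj
    exact Statement16Aux.partB hWsub hWn this
end

section
/- Let n and k be nonnegative integers with n ≥ k+1, and let G = K_{n+k+2} + ((k+1)K₁ ∪ K₂) be the join of the complete graph on n+k+2 vertices with the disjoint union of k+1 isolated vertices and a single edge K₂. Then G is (n+k+2)-connected but not a ({K₂, odd cycles of length ≥ 5}, n)-factor critical avoidable graph. -/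
open SimpleGraph

variable {α β : Type*}

private lemma adj_succ_top : ∀ y : Fin 2, (⊤ : SimpleGraph (Fin 2)).Adj y (y + 1) := by decide

private lemma adj_succ_cycle (m' : ℕ) :
    ∀ y : Fin (m' + 2), (cycleGraph (m' + 2)).Adj y (y + 1) := by
  intro y
  rw [cycleGraph_adj]
  exact Or.inr (add_sub_cancel_left y 1)

private lemma comp_inj_of_iso {V γ : Type*} [AddGroup γ] [One γ] {F : SimpleGraph V} {s : Set V}
    {B : SimpleGraph γ} (φ : (F.induce s) ≃g B) (hB : ∀ y : γ, B.Adj y (y + 1)) :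
    ∃ g : V → V, (∀ x ∈ s, g x ∈ s) ∧ Set.InjOn g s ∧ ∀ x ∈ s, F.Adj x (g x) := by
  classical
  refine ⟨fun x => if hx : x ∈ s then ((φ.symm (φ ⟨x, hx⟩ + 1) : s) : V) else x, ?_, ?_, ?_⟩
  · intro x hx
    simp only [dif_pos hx]
    exact (φ.symm (φ ⟨x, hx⟩ + 1)).2
  · intro x hx y hy h
    simp only [dif_pos hx, dif_pos hy] at h
    have h2 : φ.symm (φ ⟨x, hx⟩ + 1) = φ.symm (φ ⟨y, hy⟩ + 1) := Subtype.ext h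
    have h3 : φ ⟨x, hx⟩ + 1 = φ ⟨y, hy⟩ + 1 := φ.symm.toEquiv.injective h2
    have h4 := add_right_cancel h3
    have h5 : (⟨x, hx⟩ : s) = ⟨y, hy⟩ := φ.toEquiv.injective h4
    exact congrArg Subtype.val h5
  · intro x hx
    simp only [dif_pos hx]
    have h6 : (F.induce s).Adj (φ.symm (φ ⟨x, hx⟩)) (φ.symm (φ ⟨x, hx⟩ + 1)) :=
      φ.symm.map_adj_iff.mpr (hB (φ ⟨x, hx⟩))
    rw [RelIso.symm_apply_apply] at h6
    exact h6

private lemma comp_step {V : Type*} (F : SimpleGraph V)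
    (hF : ∀ c : F.ConnectedComponent,
      Nonempty ((F.induce c.supp) ≃g (⊤ : SimpleGraph (Fin 2))) ∨
      ∃ m : ℕ, 5 ≤ m ∧ Odd m ∧ Nonempty ((F.induce c.supp) ≃g cycleGraph m))
    (c : F.ConnectedComponent) :
    ∃ g : V → V, (∀ x ∈ c.supp, g x ∈ c.supp) ∧ Set.InjOn g c.supp ∧
      ∀ x ∈ c.supp, F.Adj x (g x) := by
  rcases hF c with hφ | ⟨m, hm5, -, hφ⟩
  · obtain ⟨φ⟩ := hφ
    exact comp_inj_of_iso φ adj_succ_top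
  · obtain ⟨m', rfl⟩ : ∃ m', m = m' + 2 := ⟨m - 2, by omega⟩
    obtain ⟨φ⟩ := hφ
    exact comp_inj_of_iso φ (adj_succ_cycle m')

private lemma global_inj {V : Type*} (F : SimpleGraph V)
    (hF : ∀ c : F.ConnectedComponent,
      Nonempty ((F.induce c.supp) ≃g (⊤ : SimpleGraph (Fin 2))) ∨
      ∃ m : ℕ, 5 ≤ m ∧ Odd m ∧ Nonempty ((F.induce c.supp) ≃g cycleGraph m)) :
    ∃ f : V → V, Function.Injective f ∧ ∀ x, F.Adj x (f x) := by
  choose g hmem hinj hadj using comp_step F hF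
  refine ⟨fun x => g (F.connectedComponentMk x) x, ?_, ?_⟩
  · intro x y h
    simp only at h
    have hx : x ∈ (F.connectedComponentMk x).supp := rfl
    have hy : y ∈ (F.connectedComponentMk y).supp := rfl
    have hcx := hmem _ x hx
    have hcy := hmem _ y hy
    rw [h] at hcx
    rw [SimpleGraph.ConnectedComponent.mem_supp_iff] at hcx hcy
    have hc : F.connectedComponentMk x = F.connectedComponentMk y := by rw [← hcx, hcy]
    rw [hc] at h
    exact hinj _ (hc ▸ hx) hy h
  · intro x
    exact hadj _ x rfl

/-- For `n ≥ k+1`, the graph `G = K_{n+k+2} + ((k+1)K₁ ∪ K₂)` is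
`(n+k+2)`-connected but not a `({K₂, C_{2i+1} | i ≥ 2}, n)`-factor critical avoidable
graph. -/
theorem statement17 (n k : ℕ) (hnk : k + 1 ≤ n) :
    IsMConnected (exampleGraph3 n k) (n + k + 2) ∧
    ¬ K2OddCycleFactorCriticalAvoidable (exampleGraph3 n k) n := by
  constructor
  · constructor
    · rw [Nat.card_eq_fintype_card]
      simp only [Fintype.card_sum, Fintype.card_fin]
      omega
    · intro S hS
      have hex : ∃ i : Fin (n + k + 2), Sum.inl i ∉ S := by
        by_contra hall
        push_neg at hall
        have hsub : Set.range (Sum.inl : Fin (n + k + 2) → Fin (n + k + 2) ⊕ (Fin (k + 1) ⊕ Fin 2)) ⊆ S := by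
          rintro _ ⟨i, rfl⟩; exact hall i
        have h1 := Set.ncard_le_ncard hsub (Set.toFinite S)
        rw [← Set.image_univ, Set.ncard_image_of_injective _ Sum.inl_injective, Set.ncard_univ,
          Nat.card_eq_fintype_card, Fintype.card_fin] at h1
        omega
      obtain ⟨i₀, hi₀⟩ := hex
      have key : ∀ x : ↥(Sᶜ), ((exampleGraph3 n k).delVerts S).Reachable x ⟨Sum.inl i₀, hi₀⟩ := by
        rintro ⟨xv, hxm⟩
        by_cases hx : (⟨xv, hxm⟩ : ↥(Sᶜ)) = ⟨Sum.inl i₀, hi₀⟩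
        · exact hx ▸ SimpleGraph.Reachable.refl _
        · apply SimpleGraph.Adj.reachable
          show (exampleGraph3 n k).Adj xv (Sum.inl i₀)
          rcases xv with j | b
          · have hj : j ≠ i₀ := by
              intro h; exact hx (by simp [h])
            exact hj
          · trivial
      haveI : Nonempty ↥(Sᶜ) := ⟨⟨Sum.inl i₀, hi₀⟩⟩
      exact ⟨fun x y => (key x).trans (key y).symm⟩
  · intro hcrit
    have hle : n ≤ n + k + 2 := by omega
    set S : Set (Fin (n + k + 2)) := Set.range (Fin.castLE hle) with hSdef
    have hSn : S.ncard = n := by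
      rw [hSdef, ← Set.image_univ, Set.ncard_image_of_injective _ (Fin.castLE_injective hle),
        Set.ncard_univ, Nat.card_eq_fintype_card, Fintype.card_fin]
    set W : Set (Fin (n + k + 2) ⊕ (Fin (k + 1) ⊕ Fin 2)) := Sum.inl '' S with hWdef
    have hWn : W.ncard = n := by
      rw [hWdef, Set.ncard_image_of_injective _ Sum.inl_injective, hSn]
    set u : Fin (n + k + 2) ⊕ (Fin (k + 1) ⊕ Fin 2) := Sum.inr (Sum.inr 0) with hu
    set v : Fin (n + k + 2) ⊕ (Fin (k + 1) ⊕ Fin 2) := Sum.inr (Sum.inr 1) with hv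
    have huW : u ∉ W := by rintro ⟨i, -, h⟩; exact Sum.inl_ne_inr h
    have hvW : v ∉ W := by rintro ⟨i, -, h⟩; exact Sum.inl_ne_inr h
    have hadj : (exampleGraph3 n k).Adj u v := by
      show ((⊥ : SimpleGraph (Fin (k + 1))) ⊕g (⊤ : SimpleGraph (Fin 2))).Adj
        (Sum.inr 0) (Sum.inr 1)
      show (⊤ : SimpleGraph (Fin 2)).Adj 0 1
      simp [SimpleGraph.top_adj]
    obtain ⟨F, hFle, hFcomp⟩ := hcrit W hWn u v huW hvW hadj
    have hrr : ∀ (x y : ↥(Wᶜ)) (a b : Fin (k + 1) ⊕ Fin 2),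
        x.val = Sum.inr a → y.val = Sum.inr b →
        ¬ (((exampleGraph3 n k).deleteEdges {s(u, v)}).delVerts W).Adj x y := by
      intro x y a b hxa hyb hadjxy
      have h1 : ((exampleGraph3 n k).deleteEdges {s(u, v)}).Adj x.val y.val := hadjxy
      rw [SimpleGraph.deleteEdges_adj] at h1
      obtain ⟨h2, h3⟩ := h1
      rw [hxa, hyb] at h2 h3
      have h2' : ((⊥ : SimpleGraph (Fin (k + 1))) ⊕g (⊤ : SimpleGraph (Fin 2))).Adj a b := h2
      rcases a with a | i <;> rcases b with b | j
      · exact h2'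
      · exact Bool.noConfusion h2'
      · exact Bool.noConfusion h2'
      · have hij : i ≠ j := by
          have : (⊤ : SimpleGraph (Fin 2)).Adj i j := h2'
          simpa using this
        apply h3
        simp only [Set.mem_singleton_iff]
        fin_cases i <;> fin_cases j
        · exact absurd rfl hij
        · rfl
        · rw [Sym2.eq_swap]
          rfl
        · exact absurd rfl hij
    obtain ⟨f, hfinj, hfadj⟩ := global_inj F hFcomp
    have hleft : ∀ x : ↥(Wᶜ), (∃ b, x.val = Sum.inr b) → ∃ a, (f x).val = Sum.inl a := by
      rintro x ⟨b, hb⟩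
      rcases h : (f x).val with a | b'
      · exact ⟨a, rfl⟩
      · exact absurd (hFle (hfadj x)) (hrr x (f x) b b' hb h)
    have hinj2 : Function.Injective
        (fun r : {x : ↥(Wᶜ) // ∃ b, x.val = Sum.inr b} =>
          (⟨f r.val, hleft r.val r.2⟩ : {x : ↥(Wᶜ) // ∃ a, x.val = Sum.inl a})) := by
      intro r s h
      exact Subtype.ext (hfinj (congrArg Subtype.val h))
    have hcard := Nat.card_le_card_of_injective _ hinj2
    have hR : Nat.card {x : ↥(Wᶜ) // ∃ b, x.val = Sum.inr b} = k + 3 := by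
      let e : (Fin (k + 1) ⊕ Fin 2) → {x : ↥(Wᶜ) // ∃ b, x.val = Sum.inr b} :=
        fun b => ⟨⟨Sum.inr b, by rintro ⟨i, -, h⟩; exact Sum.inl_ne_inr h⟩, ⟨b, rfl⟩⟩
      have hbij : Function.Bijective e := by
        constructor
        · intro a b h
          exact Sum.inr_injective (congrArg Subtype.val (congrArg Subtype.val h))
        · rintro ⟨⟨xv, hxm⟩, ⟨b, hb⟩⟩
          exact ⟨b, Subtype.ext (Subtype.ext hb.symm)⟩
      rw [← Nat.card_eq_of_bijective e hbij, Nat.card_sum, Nat.card_eq_fintype_card,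
        Nat.card_eq_fintype_card, Fintype.card_fin, Fintype.card_fin]
    have hL : Nat.card {x : ↥(Wᶜ) // ∃ a, x.val = Sum.inl a} = k + 2 := by
      let e : ↥(Sᶜ) → {x : ↥(Wᶜ) // ∃ a, x.val = Sum.inl a} :=
        fun i => ⟨⟨Sum.inl i.val, by
          rintro ⟨j, hj, h⟩
          exact i.2 (Sum.inl_injective h ▸ hj)⟩, ⟨i.val, rfl⟩⟩
      have hbij : Function.Bijective e := by
        constructor
        · intro a b h
          exact Subtype.ext (Sum.inl_injective (congrArg Subtype.val (congrArg Subtype.val h)))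
        · rintro ⟨⟨xv, hxm⟩, ⟨a, ha⟩⟩
          have haS : a ∈ Sᶜ := by
            intro haS
            exact hxm ⟨a, haS, ha.symm⟩
          exact ⟨⟨a, haS⟩, Subtype.ext (Subtype.ext ha.symm)⟩
      have hSc : (Sᶜ : Set (Fin (n + k + 2))).ncard = k + 2 := by
        have := Set.ncard_add_ncard_compl S
        rw [hSn, Nat.card_eq_fintype_card, Fintype.card_fin] at this
        omega
      rw [← Nat.card_eq_of_bijective e hbij, Nat.card_coe_set_eq, hSc]
    rw [hR, hL] at hcard
    omega
end
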